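/- Let K ∈ M_+(ℝ_+×ℝ_+) be homogeneous of degree −1, i.e., K(λx, λy) = λ^{-1} K(x,y) for all λ, x, y ∈ ℝ_+, and fix 1 < p < ∞. Then there is C > 0 with [ ∫_{ℝ_+} (T_K f)(x)^p dx ]^{1/p} ≤ C [ ∫_{ℝ_+} f(y)^p dy ]^{1/p} for all f ∈ M_+(ℝ_+), if and only if ∫_{ℝ_+} K(1,y) y^{-1/p} dy < ∞. -/

import Mathlib

open MeasureTheory Set
open scoped ENNReal

noncomputable section

/-- The positive integral operator `T_K` on `ℝ₊`. -/
def TK (K : ℝ → ℝ → ℝ≥0∞) (f : ℝ → ℝ≥0∞) (x : ℝ) : ℝ≥0∞ :=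
  ∫⁻ y in Ioi (0:ℝ), K x y * f y

/-- Distribution function `μ_f(λ) = |{x ∈ ℝ₊ : f x > λ}|`. -/
def distrib (f : ℝ → ℝ≥0∞) (l : ℝ≥0∞) : ℝ≥0∞ :=
  volume {x : ℝ | 0 < x ∧ l < f x}

/-- Nonincreasing rearrangement `f*(t) = inf{λ : μ_f(λ) ≤ t}`. -/
def rearr (f : ℝ → ℝ≥0∞) (t : ℝ) : ℝ≥0∞ :=
  sInf {l : ℝ≥0∞ | distrib f l ≤ ENNReal.ofReal t}

/-- Extension of a real function to `ℝ≥0∞`. -/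
def extE (F : ℝ → ℝ) (a : ℝ≥0∞) : ℝ≥0∞ :=
  if a = ⊤ then ⊤ else ENNReal.ofReal (F a.toReal)

/-- Orlicz–Lorentz gauge functional `ρ_{Φ,u}`. -/
def ogauge (F : ℝ → ℝ) (u : ℝ → ℝ) (f : ℝ → ℝ≥0∞) : ℝ≥0∞ :=
  sInf {l : ℝ≥0∞ | 0 < l ∧
    (∫⁻ x in Ioi (0:ℝ), extE F (f x / l) * ENNReal.ofReal (u x)) ≤ 1}

/-- `F` is an N-function with density `φ`: `F x = ∫_0^x φ`, `φ` increasing from `ℝ₊` onto `ℝ₊`. -/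
def IsNFunction (F φ : ℝ → ℝ) : Prop :=
  StrictMonoOn φ (Ioi 0) ∧ MapsTo φ (Ioi 0) (Ioi 0) ∧ SurjOn φ (Ioi 0) (Ioi 0) ∧
    ∀ x : ℝ, 0 ≤ x → F x = ∫ y in (0:ℝ)..x, φ y

/-- `F(2t) ≈ F(t)` on `ℝ₊`. -/
def Doubling (F : ℝ → ℝ) : Prop := ∃ C > 0, ∀ t > 0, F (2 * t) ≤ C * F t

/-- A weight: nonnegative, measurable, locally integrable on `ℝ₊`. -/
def IsWeight (u : ℝ → ℝ) : Prop :=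
  Measurable u ∧ (∀ x, 0 ≤ u x) ∧ LocallyIntegrableOn u (Ioi 0)

/-- `U(x) = ∫_0^x u`. -/
def Uw (u : ℝ → ℝ) (x : ℝ) : ℝ := ∫ t in (0:ℝ)..x, u t

/-- `Ψ` (with density `ψ`) is the complementary N-function of the N-function `Φ`
(with density `φ`), i.e. `ψ = φ⁻¹` and `Ψ t = ∫_0^t φ⁻¹`. -/
def IsComplementary (F φ G ψ : ℝ → ℝ) : Prop :=
  IsNFunction F φ ∧ IsNFunction G ψ ∧ InvOn ψ φ (Ioi 0) (Ioi 0)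

/-- `g` is the inverse of `f` on `[0,∞)`. -/
def IsInverseOn (g f : ℝ → ℝ) : Prop :=
  (∀ x ≥ 0, g (f x) = x) ∧ (∀ y ≥ 0, f (g y) = y)

/-- Iterated rearrangement `L(t,s) = (K^{*₂})^{*₁}(t,s)`. -/
def iterRearr (K : ℝ → ℝ → ℝ≥0∞) (t s : ℝ) : ℝ≥0∞ :=
  rearr (fun x => rearr (fun y => K x y) s) t

/-- `α(λ,x) = ∫_x^∞ Φ(λ/U(y)) u(y) dy`. -/
def hardyAlpha (F : ℝ → ℝ) (u : ℝ → ℝ) (lam x : ℝ) : ℝ≥0∞ :=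
  ∫⁻ y in Ioi x, extE F (ENNReal.ofReal lam / ENNReal.ofReal (Uw u y)) * ENNReal.ofReal (u y)

/-- `β(λ,x) = ∫_x^∞ Φ(λ/y) u(y) dy`. -/
def hardyBeta (F : ℝ → ℝ) (u : ℝ → ℝ) (lam x : ℝ) : ℝ≥0∞ :=
  ∫⁻ y in Ioi x, ENNReal.ofReal (F (lam / y)) * ENNReal.ofReal (u y)

/-- The Hardy-averaging conditions (14)–(15) for an N-function `Φ` (density `φ`,
inverse density `ψ = φ⁻¹`) and weight `u`. -/
def HardyConditions (F φ ψ u : ℝ → ℝ) : Prop :=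
  ∃ c > 0, (∀ lam > 0, ∀ x > 0,
      extE φ (ENNReal.ofReal c * hardyAlpha F u lam x / ENNReal.ofReal lam) *
        ENNReal.ofReal (Uw u x) ≤ ENNReal.ofReal (lam / c)) ∧
    (∀ lam > 0, ∀ x > 0,
      (∫⁻ y in Ioo (0:ℝ) x,
        extE ψ ((ENNReal.ofReal c * hardyBeta F u lam x / ENNReal.ofReal lam) *
          ENNReal.ofReal (y / Uw u y)) * ENNReal.ofReal (y * u y / Uw u y))
        ≤ ENNReal.ofReal (lam / c))


lemma scale_lint (g : ℝ → ℝ≥0∞) (hg : Measurable g) {a : ℝ} (ha : 0 < a) :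
    ∫⁻ t in Ioi (0:ℝ), g (a * t) = (ENNReal.ofReal a)⁻¹ * ∫⁻ y in Ioi (0:ℝ), g y := by
  have hpre : (a * ·) ⁻¹' (Ioi (0:ℝ)) = Ioi 0 := by
    ext t; simp [mul_pos_iff, ha, ha.not_gt]
  calc ∫⁻ t in Ioi (0:ℝ), g (a * t)
      = ∫⁻ y, g y ∂((volume.restrict ((a * ·) ⁻¹' (Ioi (0:ℝ)))).map (a * ·)) := by
        rw [lintegral_map hg (measurable_const_mul a), hpre]
    _ = ∫⁻ y, g y ∂((volume.map (a * ·)).restrict (Ioi 0)) := by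
        rw [Measure.restrict_map (measurable_const_mul a) measurableSet_Ioi]
    _ = (ENNReal.ofReal a)⁻¹ * ∫⁻ y in Ioi (0:ℝ), g y := by
        rw [Real.map_volume_mul_left ha.ne', Measure.restrict_smul, lintegral_smul_measure,
          abs_of_pos (inv_pos.2 ha), ENNReal.ofReal_inv_of_pos ha, smul_eq_mul]

lemma TK_eq (K : ℝ → ℝ → ℝ≥0∞) (hK : Measurable (Function.uncurry K))
    (hhom : ∀ l > 0, ∀ x > 0, ∀ y > 0, K (l * x) (l * y) = K x y / ENNReal.ofReal l)
    (f : ℝ → ℝ≥0∞) (hf : Measurable f) {x : ℝ} (hx : 0 < x) :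
    TK K f x = ∫⁻ t in Ioi (0:ℝ), K 1 t * f (x * t) := by
  have hKx : Measurable (K x) := hK.of_uncurry_left
  have h1 : ∫⁻ t in Ioi (0:ℝ), K x (x * t) * f (x * t)
      = (ENNReal.ofReal x)⁻¹ * TK K f x :=
    scale_lint (fun y => K x y * f y) (hKx.mul hf) hx
  have h2 : ∀ t ∈ Ioi (0:ℝ), K 1 t * f (x * t)
      = ENNReal.ofReal x * (K x (x * t) * f (x * t)) := by
    intro t ht
    have := hhom x hx 1 one_pos t ht
    rw [mul_one] at this
    rw [this, ← mul_assoc, ENNReal.mul_div_cancel (by simpa using hx) ENNReal.ofReal_ne_top]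
  have hm : Measurable (fun t : ℝ => K x (x*t) * f (x*t)) := by
    exact Measurable.mul (hKx.comp (measurable_const_mul x)) (hf.comp (measurable_const_mul x))
  rw [setLIntegral_congr_fun measurableSet_Ioi h2,
    lintegral_const_mul _ hm, h1, ← mul_assoc,
    ENNReal.mul_inv_cancel (by simpa using hx) ENNReal.ofReal_ne_top, one_mul]

lemma bound_lemma (K : ℝ → ℝ → ℝ≥0∞) (hK : Measurable (Function.uncurry K))
    (hhom : ∀ l > 0, ∀ x > 0, ∀ y > 0, K (l * x) (l * y) = K x y / ENNReal.ofReal l)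
    (p : ℝ) (hp : 1 < p) (f : ℝ → ℝ≥0∞) (hf : Measurable f) :
    (∫⁻ x in Ioi (0:ℝ), TK K f x ^ p) ^ (1/p) ≤
      (∫⁻ t in Ioi (0:ℝ), K 1 t * ENNReal.ofReal (t ^ (-(1/p)))) *
        (∫⁻ y in Ioi (0:ℝ), f y ^ p) ^ (1/p) := by
  have hpq : p.HolderConjugate (p.conjExponent) := Real.HolderConjugate.conjExponent hp
  set q := p.conjExponent with hqdef
  have hp0 : (0:ℝ) < p := hpq.pos
  have hq0 : (0:ℝ) < q := hpq.symm.pos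
  have hK1 : Measurable (K 1) := hK.of_uncurry_left
  set A := ∫⁻ t in Ioi (0:ℝ), K 1 t * ENNReal.ofReal (t ^ (-(1/p))) with hA
  set N := ∫⁻ y in Ioi (0:ℝ), f y ^ p with hN
  set G : ℝ → ℝ → ℝ≥0∞ := fun x t => K 1 t * ENNReal.ofReal (t ^ (1/q)) * f (x*t) ^ p with hG
  have hGm : Measurable (Function.uncurry G) := by
    apply Measurable.mul
    · apply Measurable.mul
      · exact hK1.comp measurable_snd
      · fun_prop
    · have : Measurable fun z : ℝ × ℝ => f (z.1 * z.2) := hf.comp (measurable_fst.mul measurable_snd)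
      fun_prop
  -- pointwise Hölder bound
  have key : ∀ x ∈ Ioi (0:ℝ), TK K f x ^ p ≤ A ^ ((1/q)*p) * ∫⁻ t in Ioi (0:ℝ), G x t := by
    intro x hx
    have hx0 : (0:ℝ) < x := hx
    set F1 : ℝ → ℝ≥0∞ := fun t => (K 1 t * ENNReal.ofReal (t ^ (-(1/p)))) ^ (1/q) with hF1
    set F2 : ℝ → ℝ≥0∞ := fun t => (K 1 t) ^ (1/p) * ENNReal.ofReal (t ^ (1/(p*q))) * f (x*t)
      with hF2
    have hsplit : ∀ t ∈ Ioi (0:ℝ), K 1 t * f (x * t) = F1 t * F2 t := by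
      intro t ht
      have ht0 : (0:ℝ) < t := ht
      have e1 : (K 1 t) ^ (1/q) * (K 1 t) ^ (1/p) = K 1 t := by
        rw [← ENNReal.rpow_add_of_nonneg _ _ (by positivity) (by positivity),
          show 1/q + 1/p = 1 by rw [one_div, one_div]; exact hpq.symm.inv_add_inv_eq_one,
          ENNReal.rpow_one]
      have e2 : (ENNReal.ofReal (t ^ (-(1/p)))) ^ (1/q) * ENNReal.ofReal (t ^ (1/(p*q))) = 1 := by
        rw [ENNReal.ofReal_rpow_of_pos (Real.rpow_pos_of_pos ht0 _), ← Real.rpow_mul ht0.le,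
          ← ENNReal.ofReal_mul (Real.rpow_nonneg ht0.le _), ← Real.rpow_add ht0,
          show -(1/p) * (1/q) + 1/(p*q) = 0 by field_simp; ring, Real.rpow_zero, ENNReal.ofReal_one]
      rw [hF1, hF2]
      calc K 1 t * f (x * t)
          = ((K 1 t) ^ (1/q) * (K 1 t) ^ (1/p)) *
            (((ENNReal.ofReal (t ^ (-(1/p)))) ^ (1/q) * ENNReal.ofReal (t ^ (1/(p*q))))) *
            f (x*t) := by rw [e1, e2, mul_one]
        _ = (K 1 t * ENNReal.ofReal (t ^ (-(1/p)))) ^ (1/q) *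
            ((K 1 t) ^ (1/p) * ENNReal.ofReal (t ^ (1/(p*q))) * f (x*t)) := by
            rw [ENNReal.mul_rpow_of_nonneg _ _ (by positivity : (0:ℝ) ≤ 1/q)]; ring
    have hH := ENNReal.lintegral_mul_le_Lp_mul_Lq (volume.restrict (Ioi (0:ℝ))) hpq.symm
      (f := F1) (g := F2) (by fun_prop (disch := assumption)) (by fun_prop (disch := assumption))
    have eF1 : ∫⁻ t in Ioi (0:ℝ), F1 t ^ q = A := by
      rw [hA]
      refine lintegral_congr fun t => ?_
      rw [hF1, ← ENNReal.rpow_mul, one_div_mul_cancel hq0.ne', ENNReal.rpow_one]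
    have eF2 : ∀ t ∈ Ioi (0:ℝ), F2 t ^ p = G x t := by
      intro t ht
      have ht0 : (0:ℝ) < t := ht
      rw [hF2, hG, ENNReal.mul_rpow_of_nonneg _ _ hp0.le,
        ENNReal.mul_rpow_of_nonneg _ _ hp0.le, ← ENNReal.rpow_mul,
        one_div_mul_cancel hp0.ne', ENNReal.rpow_one,
        ENNReal.ofReal_rpow_of_pos (Real.rpow_pos_of_pos ht0 _), ← Real.rpow_mul ht0.le]
      rw [show 1/(p*q) * p = 1/q by field_simp]
    have step : TK K f x ≤ A ^ (1/q) * (∫⁻ t in Ioi (0:ℝ), G x t) ^ (1/p) := by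
      rw [TK_eq K hK hhom f hf hx0,
        setLIntegral_congr_fun measurableSet_Ioi hsplit]
      calc ∫⁻ t in Ioi (0:ℝ), F1 t * F2 t
          ≤ (∫⁻ t in Ioi (0:ℝ), F1 t ^ q) ^ (1/q) * (∫⁻ t in Ioi (0:ℝ), F2 t ^ p) ^ (1/p) := hH
        _ = A ^ (1/q) * (∫⁻ t in Ioi (0:ℝ), G x t) ^ (1/p) := by
            rw [eF1, setLIntegral_congr_fun measurableSet_Ioi eF2]
    calc TK K f x ^ p ≤ (A ^ (1/q) * (∫⁻ t in Ioi (0:ℝ), G x t) ^ (1/p)) ^ p :=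
          ENNReal.rpow_le_rpow step hp0.le
      _ = A ^ ((1/q)*p) * ∫⁻ t in Ioi (0:ℝ), G x t := by
          rw [ENNReal.mul_rpow_of_nonneg _ _ hp0.le, ← ENNReal.rpow_mul, ← ENNReal.rpow_mul,
            one_div_mul_cancel hp0.ne', ENNReal.rpow_one]
  have hI : Measurable fun x => ∫⁻ t in Ioi (0:ℝ), G x t :=
    Measurable.lintegral_prod_right hGm
  have inner : ∀ t ∈ Ioi (0:ℝ), (∫⁻ x in Ioi (0:ℝ), G x t) =
      (K 1 t * ENNReal.ofReal (t ^ (-(1/p)))) * N := by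
    intro t ht
    have ht0 : (0:ℝ) < t := ht
    have hfp : Measurable fun y => f y ^ p := by fun_prop
    have e : ∀ x : ℝ, G x t
        = K 1 t * ENNReal.ofReal (t ^ (1/q)) * (fun y => f y ^ p) (t * x) := by
      intro x; rw [hG]; simp [mul_comm x t]
    have hexp : ENNReal.ofReal (t ^ (1/q)) * (ENNReal.ofReal t)⁻¹
        = ENNReal.ofReal (t ^ (-(1/p))) := by
      rw [← ENNReal.ofReal_inv_of_pos ht0, ← Real.rpow_neg_one t,
        ← ENNReal.ofReal_mul (Real.rpow_nonneg ht0.le _), ← Real.rpow_add ht0,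
        show 1/q + (-1) = -(1/p) by
          rw [one_div, one_div]; linarith [hpq.inv_add_inv_eq_one]]
    calc ∫⁻ x in Ioi (0:ℝ), G x t
        = K 1 t * ENNReal.ofReal (t ^ (1/q)) *
            ∫⁻ x in Ioi (0:ℝ), (fun y => f y ^ p) (t * x) := by
          have hc : Measurable fun x : ℝ => (fun y => f y ^ p) (t*x) := by
            exact hfp.comp (measurable_const_mul t)
          simp_rw [e]
          rw [lintegral_const_mul _ hc]
      _ = K 1 t * ENNReal.ofReal (t ^ (1/q)) * ((ENNReal.ofReal t)⁻¹ * N) := by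
          rw [scale_lint _ hfp ht0]
      _ = (K 1 t * ENNReal.ofReal (t ^ (-(1/p)))) * N := by
          rw [← hexp]; ring
  have step2 : ∫⁻ x in Ioi (0:ℝ), TK K f x ^ p ≤ A ^ ((1/q)*p) * (A * N) := by
    calc ∫⁻ x in Ioi (0:ℝ), TK K f x ^ p
        ≤ ∫⁻ x in Ioi (0:ℝ), A ^ ((1/q)*p) * ∫⁻ t in Ioi (0:ℝ), G x t :=
          setLIntegral_mono (by fun_prop (disch := exact hI)) key
      _ = A ^ ((1/q)*p) * ∫⁻ x in Ioi (0:ℝ), ∫⁻ t in Ioi (0:ℝ), G x t :=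
          lintegral_const_mul _ hI
      _ = A ^ ((1/q)*p) * ∫⁻ t in Ioi (0:ℝ), ∫⁻ x in Ioi (0:ℝ), G x t := by
          rw [lintegral_lintegral_swap hGm.aemeasurable]
      _ = A ^ ((1/q)*p) * (A * N) := by
          rw [setLIntegral_congr_fun measurableSet_Ioi inner,
            lintegral_mul_const _ (by fun_prop (disch := exact hK1) :
              Measurable fun t => K 1 t * ENNReal.ofReal (t ^ (-(1/p)))), ← hA]
  calc (∫⁻ x in Ioi (0:ℝ), TK K f x ^ p) ^ (1/p)
      ≤ (A ^ ((1/q)*p) * (A * N)) ^ (1/p) :=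
        ENNReal.rpow_le_rpow step2 (one_div_pos.2 hp0).le
    _ = A * N ^ (1/p) := by
        rw [ENNReal.mul_rpow_of_nonneg _ _ (one_div_pos.2 hp0).le,
          ENNReal.mul_rpow_of_nonneg _ _ (one_div_pos.2 hp0).le, ← ENNReal.rpow_mul,
          show (1/q)*p*(1/p) = 1/q by field_simp, ← mul_assoc,
          ← ENNReal.rpow_add_of_nonneg _ _ (one_div_pos.2 hq0).le (one_div_pos.2 hp0).le,
          show 1/q + 1/p = 1 by rw [one_div, one_div]; linarith [hpq.inv_add_inv_eq_one],
          ENNReal.rpow_one]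

lemma lint_inv {u v : ℝ} (hu : 0 < u) (huv : u ≤ v) :
    ∫⁻ x in Ioo u v, ENNReal.ofReal x⁻¹ = ENNReal.ofReal (Real.log (v/u)) := by
  have hne : ∀ x : ℝ, x ∈ uIcc u v → x ≠ 0 := fun x hx =>
    (lt_of_lt_of_le hu (by rw [uIcc_of_le huv] at hx; exact hx.1)).ne'
  have hInt : IntegrableOn (fun x : ℝ => x⁻¹) (Ioo u v) := by
    have := (intervalIntegral.intervalIntegrable_inv (f := id) (μ := volume) hne continuousOn_id)
    exact ((intervalIntegrable_iff_integrableOn_Ioc_of_le huv).1 this).mono_set Ioo_subset_Ioc_self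
  rw [← MeasureTheory.ofReal_integral_eq_lintegral_ofReal hInt ?nn]
  case nn =>
    refine (ae_restrict_iff' measurableSet_Ioo).2 (Filter.Eventually.of_forall fun x hx => ?_)
    exact inv_nonneg.2 (le_of_lt (lt_trans hu hx.1))
  rw [← MeasureTheory.integral_Ioc_eq_integral_Ioo, ← intervalIntegral.integral_of_le huv,
    integral_inv (notMem_uIcc_of_lt hu (lt_of_lt_of_le hu huv))]


lemma necessity (K : ℝ → ℝ → ℝ≥0∞) (hK : Measurable (Function.uncurry K))
    (hhom : ∀ l > 0, ∀ x > 0, ∀ y > 0, K (l * x) (l * y) = K x y / ENNReal.ofReal l)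
    (p : ℝ) (hp : 1 < p) (C : ℝ) (hC : 0 < C)
    (hbound : ∀ f : ℝ → ℝ≥0∞, Measurable f →
      (∫⁻ x in Ioi (0:ℝ), TK K f x ^ p) ^ (1 / p) ≤
        ENNReal.ofReal C * (∫⁻ y in Ioi (0:ℝ), f y ^ p) ^ (1 / p)) :
    (∫⁻ t in Ioi (0:ℝ), K 1 t * ENNReal.ofReal (t ^ (-(1/p)))) < ⊤ := by
  have hp0 : (0:ℝ) < p := lt_trans one_pos hp
  have hK1 : Measurable (K 1) := hK.of_uncurry_left
  set g : ℝ → ℝ≥0∞ := fun t => K 1 t * ENNReal.ofReal (t ^ (-(1/p))) with hg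
  have hgm : Measurable g := by
    rw [hg]; fun_prop (disch := exact hK1)
  set C' := ENNReal.ofReal C with hC'
  have claim : ∀ a b : ℝ, 0 < a → a ≤ 1 → 1 ≤ b →
      (∫⁻ t in Ioo a b, g t) ^ p ≤ 2 * C' ^ p := by
    intro a b ha ha1 hb
    set B := ∫⁻ t in Ioo a b, g t with hB
    set r := b / a with hr
    have hab : a ≤ b := le_trans ha1 hb
    have hr1 : 1 ≤ r := (one_le_div ha).2 hab
    have hrpos : 0 < r := lt_of_lt_of_le one_pos hr1
    set N := Real.exp 1 * r^2 with hN
    have he1 : (2.7:ℝ) < Real.exp 1 := by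
      have := Real.exp_one_gt_d9; norm_num at this ⊢; linarith
    have hN1 : 1 < N := by nlinarith
    have hNr : r < N := by nlinarith
    have hb0 : (0:ℝ) < b := lt_of_lt_of_le one_pos hb
    set fN : ℝ → ℝ≥0∞ :=
      (Ioo (1:ℝ) N).indicator (fun y => ENNReal.ofReal (y ^ (-(1/p)))) with hfN
    have hfNm : Measurable fN := Measurable.indicator (by fun_prop) measurableSet_Ioo
    have hnorm : ∫⁻ y in Ioi (0:ℝ), fN y ^ p = ENNReal.ofReal (Real.log N) := by
      have hpt : ∀ y : ℝ, fN y ^ p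
          = (Ioo (1:ℝ) N).indicator (fun y => ENNReal.ofReal (y⁻¹)) y := by
        intro y
        by_cases hy : y ∈ Ioo (1:ℝ) N
        · have hy0 : (0:ℝ) < y := lt_trans one_pos hy.1
          rw [hfN, indicator_of_mem hy, indicator_of_mem hy,
            ENNReal.ofReal_rpow_of_pos (Real.rpow_pos_of_pos hy0 _), ← Real.rpow_mul hy0.le,
            show -(1/p) * p = -1 by field_simp, Real.rpow_neg_one]
        · rw [hfN, indicator_of_notMem hy, indicator_of_notMem hy,
            ENNReal.zero_rpow_of_pos hp0]
      simp_rw [hpt]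
      have hsub : Ioo (1:ℝ) N ⊆ Ioi 0 := fun y hy => lt_trans one_pos hy.1
      rw [lintegral_indicator measurableSet_Ioo, Measure.restrict_restrict measurableSet_Ioo,
        inter_eq_self_of_subset_left hsub, lint_inv one_pos hN1.le, div_one]
    have hTlow : ∀ x ∈ Ioo (1/a) (N/b),
        ENNReal.ofReal x⁻¹ * B ^ p ≤ TK K fN x ^ p := by
      intro x hx
      have hx0 : (0:ℝ) < x := lt_trans (by positivity) hx.1
      have h3 : ∀ t ∈ Ioo a b, ENNReal.ofReal (x ^ (-(1/p))) * g t ≤ K 1 t * fN (x*t) := by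
        intro t ht
        have ht0 : (0:ℝ) < t := lt_trans ha ht.1
        have hxt1 : 1 < x*t := by
          calc (1:ℝ) = (1/a)*a := (one_div_mul_cancel ha.ne').symm
            _ < x * t := mul_lt_mul'' hx.1 ht.1 (by positivity) ha.le
        have hxtN : x*t < N := by
          calc x * t < (N/b) * b := mul_lt_mul'' hx.2 ht.2 hx0.le ht0.le
            _ = N := div_mul_cancel₀ _ hb0.ne'
        have hfval : fN (x*t) = ENNReal.ofReal ((x*t) ^ (-(1/p))) := by
          rw [hfN, indicator_of_mem (show x*t ∈ Ioo (1:ℝ) N from ⟨hxt1, hxtN⟩)]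
        rw [hfval, hg, Real.mul_rpow hx0.le ht0.le,
          ENNReal.ofReal_mul (Real.rpow_nonneg hx0.le _)]
        exact le_of_eq (by ring)
      have h4 : ENNReal.ofReal (x ^ (-(1/p))) * B ≤ TK K fN x := by
        rw [TK_eq K hK hhom fN hfNm hx0, hB]
        calc ENNReal.ofReal (x ^ (-(1/p))) * ∫⁻ t in Ioo a b, g t
            = ∫⁻ t in Ioo a b, ENNReal.ofReal (x ^ (-(1/p))) * g t :=
              (lintegral_const_mul _ hgm).symm
          _ ≤ ∫⁻ t in Ioo a b, K 1 t * fN (x*t) := setLIntegral_mono' measurableSet_Ioo h3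
          _ ≤ ∫⁻ t in Ioi 0, K 1 t * fN (x*t) :=
              lintegral_mono_set (fun t ht => lt_trans ha ht.1)
      calc ENNReal.ofReal x⁻¹ * B ^ p = (ENNReal.ofReal (x ^ (-(1/p))) * B) ^ p := by
            rw [ENNReal.mul_rpow_of_nonneg _ _ hp0.le,
              ENNReal.ofReal_rpow_of_pos (Real.rpow_pos_of_pos hx0 _), ← Real.rpow_mul hx0.le,
              show -(1/p) * p = -1 by field_simp, Real.rpow_neg_one]
        _ ≤ TK K fN x ^ p := ENNReal.rpow_le_rpow h4 hp0.le
    have huv : 1/a < N/b := by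
      rw [div_lt_div_iff₀ ha hb0, one_mul]
      exact (div_lt_iff₀ ha).1 hNr
    have hlow : B ^ p * ENNReal.ofReal (Real.log (N*a/b)) ≤ ∫⁻ x in Ioi (0:ℝ), TK K fN x ^ p := by
      have hsub2 : Ioo (1/a) (N/b) ⊆ Ioi (0:ℝ) := fun x hx => lt_trans (by positivity) hx.1
      calc B ^ p * ENNReal.ofReal (Real.log (N*a/b))
          = ∫⁻ x in Ioo (1/a) (N/b), ENNReal.ofReal x⁻¹ * B ^ p := by
            rw [lintegral_mul_const _ (by fun_prop : Measurable fun x : ℝ => ENNReal.ofReal x⁻¹),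
              lint_inv (by positivity) huv.le,
              show (N/b)/(1/a) = N*a/b by rw [div_div_eq_mul_div, div_one, div_mul_eq_mul_div]]
            exact mul_comm _ _
        _ ≤ ∫⁻ x in Ioo (1/a) (N/b), TK K fN x ^ p := setLIntegral_mono' measurableSet_Ioo hTlow
        _ ≤ ∫⁻ x in Ioi 0, TK K fN x ^ p := lintegral_mono_set hsub2
    have hup : ∫⁻ x in Ioi (0:ℝ), TK K fN x ^ p ≤ C' ^ p * ENNReal.ofReal (Real.log N) := by
      have h := hbound fN hfNm
      rw [hnorm] at h
      calc ∫⁻ x in Ioi (0:ℝ), TK K fN x ^ p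
          = ((∫⁻ x in Ioi (0:ℝ), TK K fN x ^ p) ^ (1/p)) ^ p := by
            rw [← ENNReal.rpow_mul, one_div_mul_cancel hp0.ne', ENNReal.rpow_one]
        _ ≤ (C' * (ENNReal.ofReal (Real.log N)) ^ (1/p)) ^ p := ENNReal.rpow_le_rpow h hp0.le
        _ = C' ^ p * ENNReal.ofReal (Real.log N) := by
            rw [ENNReal.mul_rpow_of_nonneg _ _ hp0.le, ← ENNReal.rpow_mul,
              one_div_mul_cancel hp0.ne', ENNReal.rpow_one]
    have hlogr : 0 ≤ Real.log r := Real.log_nonneg hr1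
    have hlogN : Real.log N = 1 + 2 * Real.log r := by
      rw [hN, Real.log_mul (Real.exp_pos 1).ne' (by positivity), Real.log_exp, Real.log_pow]
      push_cast; ring
    have hlogNab : Real.log (N*a/b) = 1 + Real.log r := by
      have hNab : N*a/b = Real.exp 1 * r := by
        rw [hN, hr]; field_simp
      rw [hNab, Real.log_mul (Real.exp_pos 1).ne' hrpos.ne', Real.log_exp]
    have hmain := le_trans hlow hup
    rw [hlogN, hlogNab] at hmain
    have h2' : ENNReal.ofReal (1 + 2*Real.log r) ≤ 2 * ENNReal.ofReal (1 + Real.log r) := by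
      calc ENNReal.ofReal (1 + 2*Real.log r) ≤ ENNReal.ofReal (2*(1 + Real.log r)) :=
            ENNReal.ofReal_le_ofReal (by linarith)
        _ = 2 * ENNReal.ofReal (1 + Real.log r) := by
            rw [ENNReal.ofReal_mul (by norm_num)]; norm_num
    have hmain2 : B ^ p * ENNReal.ofReal (1 + Real.log r)
        ≤ (2 * C' ^ p) * ENNReal.ofReal (1 + Real.log r) := by
      calc B ^ p * ENNReal.ofReal (1 + Real.log r)
          ≤ C' ^ p * ENNReal.ofReal (1 + 2*Real.log r) := hmain
        _ ≤ C' ^ p * (2 * ENNReal.ofReal (1 + Real.log r)) := mul_le_mul_right h2' _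
        _ = (2 * C' ^ p) * ENNReal.ofReal (1 + Real.log r) := by ring
    exact (ENNReal.mul_le_mul_iff_left (ENNReal.ofReal_pos.2 (by linarith)).ne'
      ENNReal.ofReal_ne_top).1 hmain2
  -- assemble: monotone limit
  have hfin : (2 * C' ^ p : ℝ≥0∞) ≠ ⊤ :=
    ENNReal.mul_ne_top (by norm_num) (ENNReal.rpow_ne_top_of_nonneg hp0.le ENNReal.ofReal_ne_top)
  set gn : ℕ → ℝ → ℝ≥0∞ := fun n => (Ioo (1/((n:ℝ)+1)) ((n:ℝ)+1)).indicator g with hgn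
  have hgnm : ∀ n, Measurable (gn n) := fun n => hgm.indicator measurableSet_Ioo
  have hmono : Monotone gn := monotone_nat_of_le_succ (fun n =>
    Set.indicator_le_indicator_of_subset
      (Ioo_subset_Ioo (by rw [div_le_div_iff₀] <;> push_cast <;> nlinarith) (by push_cast; linarith))
      (fun _ => zero_le))
  have hpt : ∀ t ∈ Ioi (0:ℝ), g t = ⨆ n, gn n t := by
    intro t ht
    have ht0 : (0:ℝ) < t := ht
    apply le_antisymm
    · obtain ⟨n, hn⟩ := exists_nat_gt (max t t⁻¹)
      have h1 : t < (n:ℝ)+1 := lt_trans (lt_of_le_of_lt (le_max_left _ _) hn) (lt_add_one _)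
      have h2 : 1/((n:ℝ)+1) < t := by
        have hi : t⁻¹ < (n:ℝ)+1 := lt_trans (lt_of_le_of_lt (le_max_right _ _) hn) (lt_add_one _)
        have := one_div_lt_one_div_of_lt (inv_pos.2 ht0) hi
        simp only [one_div, inv_inv] at this
        rwa [← one_div] at this
      exact le_iSup_of_le n (le_of_eq (indicator_of_mem
        (show t ∈ Ioo (1/((n:ℝ)+1)) ((n:ℝ)+1) from ⟨h2, h1⟩) g).symm)
    · refine iSup_le fun n => ?_
      by_cases h : t ∈ Ioo (1/((n:ℝ)+1)) ((n:ℝ)+1)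
      · rw [hgn]; simp only [indicator_of_mem h]; exact le_rfl
      · rw [hgn]; simp only [indicator_of_notMem h]; exact zero_le
  have hBn : ∀ n, (∫⁻ t in Ioi (0:ℝ), gn n t) ≤ (2 * C' ^ p) ^ (1/p) := by
    intro n
    have hsub : Ioo (1/((n:ℝ)+1)) ((n:ℝ)+1) ⊆ Ioi (0:ℝ) := fun x hx =>
      lt_trans (by positivity) hx.1
    have heq : (∫⁻ t in Ioi (0:ℝ), gn n t) = ∫⁻ t in Ioo (1/((n:ℝ)+1)) ((n:ℝ)+1), g t := by
      rw [hgn]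
      rw [lintegral_indicator measurableSet_Ioo, Measure.restrict_restrict measurableSet_Ioo,
        inter_eq_self_of_subset_left hsub]
    have hcl := claim (1/((n:ℝ)+1)) ((n:ℝ)+1) (by positivity)
      (by rw [div_le_one (by positivity)]; linarith [Nat.cast_nonneg (α := ℝ) n])
      (by linarith [Nat.cast_nonneg (α := ℝ) n])
    rw [heq]
    calc (∫⁻ t in Ioo (1/((n:ℝ)+1)) ((n:ℝ)+1), g t)
        = ((∫⁻ t in Ioo (1/((n:ℝ)+1)) ((n:ℝ)+1), g t) ^ p) ^ (1/p) := by
          rw [← ENNReal.rpow_mul, mul_one_div_cancel hp0.ne', ENNReal.rpow_one]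
      _ ≤ (2 * C' ^ p) ^ (1/p) := ENNReal.rpow_le_rpow hcl (by positivity)
  calc ∫⁻ t in Ioi (0:ℝ), g t
      = ∫⁻ t in Ioi (0:ℝ), ⨆ n, gn n t :=
        setLIntegral_congr_fun measurableSet_Ioi hpt
    _ = ⨆ n, ∫⁻ t in Ioi (0:ℝ), gn n t := lintegral_iSup hgnm hmono
    _ ≤ (2 * C' ^ p) ^ (1/p) := iSup_le hBn
    _ < ⊤ := ENNReal.rpow_lt_top_of_nonneg (by positivity) hfin


theorem statement18
    (K : ℝ → ℝ → ℝ≥0∞) (hK : Measurable (Function.uncurry K))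
    (hhom : ∀ l > 0, ∀ x > 0, ∀ y > 0, K (l * x) (l * y) = K x y / ENNReal.ofReal l)
    (p : ℝ) (hp : 1 < p) :
    (∃ C > 0, ∀ f : ℝ → ℝ≥0∞, Measurable f →
      (∫⁻ x in Ioi (0:ℝ), TK K f x ^ p) ^ (1 / p) ≤
        ENNReal.ofReal C * (∫⁻ y in Ioi (0:ℝ), f y ^ p) ^ (1 / p)) ↔
    (∫⁻ y in Ioi (0:ℝ), K 1 y * ENNReal.ofReal (y ^ (-(1 / p)))) < ⊤ := by
  constructor
  · rintro ⟨C, hC, hbound⟩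
    exact necessity K hK hhom p hp C hC hbound
  · intro hA
    set A := ∫⁻ y in Ioi (0:ℝ), K 1 y * ENNReal.ofReal (y ^ (-(1 / p))) with hAdef
    refine ⟨A.toReal + 1, by positivity, fun f hf => ?_⟩
    calc (∫⁻ x in Ioi (0:ℝ), TK K f x ^ p) ^ (1 / p)
        ≤ A * (∫⁻ y in Ioi (0:ℝ), f y ^ p) ^ (1 / p) := bound_lemma K hK hhom p hp f hf
      _ ≤ ENNReal.ofReal (A.toReal + 1) * (∫⁻ y in Ioi (0:ℝ), f y ^ p) ^ (1 / p) := by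
          apply mul_le_mul_left
          calc A = ENNReal.ofReal A.toReal := (ENNReal.ofReal_toReal hA.ne).symm
            _ ≤ ENNReal.ofReal (A.toReal + 1) := ENNReal.ofReal_le_ofReal (by linarith)

end
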